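/- Assume λ_1 > λ_2 > … > λ_p > 0 and y_1 ≥ y_2 ≥ … ≥ y_p ≥ 0, and let w* be a solution of the orthogonal-design ODS problem: minimize J_λ(w) subject to J_λ^D(y − w) ≤ 1. Then w*_1 ≥ w*_2 ≥ … ≥ w*_p ≥ 0 and y_1 − w*_1 ≥ y_2 − w*_2 ≥ … ≥ y_p − w*_p ≥ 0. -/

import Mathlib

noncomputable section

/-- `absSorted x k` is the `k`-th largest value (0-indexed) among `|x 0|, …, |x (p-1)|`,
i.e. the components of `|x|` sorted in nonincreasing order. -/
def absSorted {p : ℕ} (x : Fin p → ℝ) (k : Fin p) : ℝ :=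
  |x (Tuple.sort (fun i => |x i|) k.rev)|

/-- The ordered ℓ1-norm `J_λ(w) = ∑ i, λ_i |w|_(i)`. -/
def Jlam {p : ℕ} (lam : Fin p → ℝ) (w : Fin p → ℝ) : ℝ :=
  ∑ i, lam i * absSorted w i


/-- The dual norm of the ordered ℓ1-norm: `J_λ^D(x) = max {⟨x, v⟩ : J_λ(v) ≤ 1}`. -/
def JlamD {p : ℕ} (lam x : Fin p → ℝ) : ℝ :=
  sSup {c | ∃ v : Fin p → ℝ, Jlam lam v ≤ 1 ∧ c = ∑ i, x i * v i}

/-- `w` is a solution of the orthogonal-design ODS problem with data `y`: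
minimize `J_λ(w)` subject to `J_λ^D(y − w) ≤ 1`. -/
def IsODSSol {p : ℕ} (lam y w : Fin p → ℝ) : Prop :=
  JlamD lam (y - w) ≤ 1 ∧ ∀ u : Fin p → ℝ, JlamD lam (y - u) ≤ 1 → Jlam lam w ≤ Jlam lam u

namespace ODSAux

variable {p : ℕ}

/-- The permutation sorting `|x|` in decreasing order. -/
def sortPerm (x : Fin p → ℝ) : Equiv.Perm (Fin p) :=
  Fin.revPerm.trans (Tuple.sort fun i => |x i|)

lemma absSorted_apply (x : Fin p → ℝ) (k : Fin p) :
    absSorted x k = |x (sortPerm x k)| := by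
  simp [absSorted, sortPerm]

lemma absSorted_antitone (x : Fin p → ℝ) : Antitone (absSorted x) := by
  intro a b hab
  have h := Tuple.monotone_sort (fun i => |x i|)
  have hr : b.rev ≤ a.rev := Fin.rev_le_rev.mpr hab
  exact h hr

lemma jlam_eq (lam x : Fin p → ℝ) :
    Jlam lam x = ∑ k, lam k * |x (sortPerm x k)| := by
  simp [Jlam, absSorted_apply]

/-- Rearrangement upper bound: any permuted λ-weighted sum is at most `Jlam`. -/
lemma sum_perm_le {lam : Fin p → ℝ} (hA : Antitone lam) (x : Fin p → ℝ)
    (σ : Equiv.Perm (Fin p)) :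
    ∑ k, lam k * |x (σ k)| ≤ Jlam lam x := by
  have hmono : Monovary lam (absSorted x) := hA.monovary (absSorted_antitone x)
  set τ : Equiv.Perm (Fin p) := σ.trans (sortPerm x).symm with hτ
  have key : ∀ k, |x (σ k)| = absSorted x (τ k) := by
    intro k
    rw [absSorted_apply]
    simp [hτ]
  calc ∑ k, lam k * |x (σ k)| = ∑ k, lam k * absSorted x (τ k) := by
        refine Finset.sum_congr rfl fun k _ => by rw [key k]
    _ ≤ ∑ k, lam k * absSorted x k := hmono.sum_mul_comp_perm_le_sum_mul
    _ = Jlam lam x := rfl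

lemma jlam_comp_perm_le {lam : Fin p → ℝ} (hA : Antitone lam) (x : Fin p → ℝ)
    (π : Equiv.Perm (Fin p)) : Jlam lam (x ∘ π) ≤ Jlam lam x := by
  rw [jlam_eq lam (x ∘ π)]
  exact sum_perm_le hA x ((sortPerm (x ∘ π)).trans π)

lemma jlam_comp_perm {lam : Fin p → ℝ} (hA : Antitone lam) (x : Fin p → ℝ)
    (π : Equiv.Perm (Fin p)) : Jlam lam (x ∘ π) = Jlam lam x := by
  refine le_antisymm (jlam_comp_perm_le hA x π) ?_
  have h := jlam_comp_perm_le hA (x ∘ π) π.symm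
  have hxx : (x ∘ π) ∘ π.symm = x := by
    funext k; simp
  rwa [hxx] at h

lemma jlam_congr_abs {lam u v : Fin p → ℝ} (h : ∀ i, |u i| = |v i|) :
    Jlam lam u = Jlam lam v := by
  have hF : (fun i => |u i|) = fun i => |v i| := funext h
  refine Finset.sum_congr rfl fun k _ => ?_
  unfold absSorted
  rw [hF, h]

lemma jlam_zero (lam : Fin p → ℝ) : Jlam lam 0 = 0 := by
  simp [Jlam, absSorted]

/-- Strict monotonicity of `Jlam` in the absolute values of the entries. -/
lemma jlam_lt_of_abs_lt {lam : Fin p → ℝ} (hA : Antitone lam) (hpos : ∀ i, 0 < lam i)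
    {w' w : Fin p → ℝ} (h : ∀ k, |w' k| ≤ |w k|) {i0 : Fin p} (hi0 : |w' i0| < |w i0|) :
    Jlam lam w' < Jlam lam w := by
  set σ := sortPerm w' with hσ
  have h1 : Jlam lam w' = ∑ k, lam k * |w' (σ k)| := jlam_eq _ _
  have h2 : ∑ k, lam k * |w' (σ k)| < ∑ k, lam k * |w (σ k)| := by
    refine Finset.sum_lt_sum (fun k _ => mul_le_mul_of_nonneg_left (h _) (hpos k).le)
      ⟨σ.symm i0, Finset.mem_univ _, ?_⟩
    have hs : σ (σ.symm i0) = i0 := Equiv.apply_symm_apply _ _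
    rw [hs]
    exact mul_lt_mul_of_pos_left hi0 (hpos _)
  rw [h1]
  exact h2.trans_le (sum_perm_le hA w σ)

/-- Strict Schur-type inequality: strictly mixing two unequal nonnegative coordinates
(keeping their sum) strictly decreases `Jlam` when `lam` is strictly decreasing. -/
lemma jlam_schur {lam : Fin p → ℝ} (hS : StrictAnti lam) {i j : Fin p} (hij : i ≠ j)
    {w w'' : Fin p → ℝ}
    (hoff : ∀ k, k ≠ i → k ≠ j → w'' k = w k) (hsum : w'' i + w'' j = w i + w j)
    (h1 : min (w i) (w j) < w'' i) (h2 : w'' i < max (w i) (w j))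
    (hwi : 0 ≤ w i) (hwj : 0 ≤ w j) : Jlam lam w'' < Jlam lam w := by
  have hA : Antitone lam := hS.antitone
  have hne : w i ≠ w j := by
    intro h
    rw [h] at h1 h2
    rw [min_self] at h1
    rw [max_self] at h2
    exact absurd (h1.trans h2) (lt_irrefl _)
  have hden : w i - w j ≠ 0 := sub_ne_zero.mpr hne
  set t : ℝ := (w'' i - w j) / (w i - w j) with ht
  have h' : t * (w i - w j) = w'' i - w j := div_mul_cancel₀ _ hden
  have ht0 : 0 < t := by
    rcases hne.lt_or_gt with hlt | hlt
    · rw [min_eq_left hlt.le] at h1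
      rw [max_eq_right hlt.le] at h2
      nlinarith
    · rw [min_eq_right hlt.le] at h1
      rw [max_eq_left hlt.le] at h2
      nlinarith
  have ht1 : t < 1 := by
    rcases hne.lt_or_gt with hlt | hlt
    · rw [min_eq_left hlt.le] at h1
      rw [max_eq_right hlt.le] at h2
      nlinarith
    · rw [min_eq_right hlt.le] at h1
      rw [max_eq_left hlt.le] at h2
      nlinarith
  have hti : w'' i = t * w i + (1 - t) * w j := by
    have : t * w i - t * w j = w'' i - w j := by rw [← mul_sub]; exact h'
    linarith
  have htj : w'' j = t * w j + (1 - t) * w i := by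
    have hr : t * w j + (1 - t) * w i = w i + w j - (t * w i + (1 - t) * w j) := by ring
    rw [hr, ← hti]
    linarith
  have hwi'' : 0 ≤ w'' i := ((le_min hwi hwj).trans_lt h1).le
  have hwj'' : 0 ≤ w'' j := by
    have hmm : max (w i) (w j) + min (w i) (w j) = w i + w j := max_add_min _ _
    have hmin : 0 ≤ min (w i) (w j) := le_min hwi hwj
    linarith
  set σ := sortPerm w'' with hσ
  set s := Equiv.swap i j with hs
  set S1 : ℝ := ∑ k, lam k * |w (σ k)| with hS1def
  set S2 : ℝ := ∑ k, lam k * |w (s (σ k))| with hS2def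
  have key : ∀ k : Fin p, |w'' (σ k)| = t * |w (σ k)| + (1 - t) * |w (s (σ k))| := by
    intro k
    rcases eq_or_ne (σ k) i with hk | hk
    · rw [hk]
      rw [show s i = j from Equiv.swap_apply_left i j]
      rw [abs_of_nonneg hwi'', abs_of_nonneg hwi, abs_of_nonneg hwj]
      exact hti
    · rcases eq_or_ne (σ k) j with hk' | hk'
      · rw [hk']
        rw [show s j = i from Equiv.swap_apply_right i j]
        rw [abs_of_nonneg hwj'', abs_of_nonneg hwj, abs_of_nonneg hwi]
        exact htj
      · rw [show s (σ k) = σ k from Equiv.swap_apply_of_ne_of_ne hk hk',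
          hoff _ hk hk']
        ring
  have hJeq : Jlam lam w'' = t * S1 + (1 - t) * S2 := by
    rw [jlam_eq, hS1def, hS2def, Finset.mul_sum, Finset.mul_sum,
      ← Finset.sum_add_distrib]
    refine Finset.sum_congr rfl fun k _ => ?_
    rw [key k]
    ring
  have hS1 : S1 ≤ Jlam lam w := sum_perm_le hA w σ
  have hS2 : S2 ≤ Jlam lam w := by
    have h := sum_perm_le hA w (σ.trans s)
    simpa [Equiv.trans_apply] using h
  have hS12 : S1 ≠ S2 := by
    set d : Fin p → ℝ := fun m => |w m| - |w (s m)| with hd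
    have hdoff : ∀ m, m ≠ i → m ≠ j → d m = 0 := by
      intro m hmi hmj
      simp [hd, hs, Equiv.swap_apply_of_ne_of_ne hmi hmj]
    have e1 : S1 - S2 = ∑ k, lam k * d (σ k) := by
      rw [hS1def, hS2def, ← Finset.sum_sub_distrib]
      exact Finset.sum_congr rfl fun k _ => by rw [hd]; ring
    have e2 : ∑ k, lam k * d (σ k) = ∑ m, lam (σ.symm m) * d m := by
      rw [← Equiv.sum_comp σ (fun m => lam (σ.symm m) * d m)]
      simp
    have e3 : ∑ m, lam (σ.symm m) * d m = lam (σ.symm i) * d i + lam (σ.symm j) * d j := by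
      rw [← Finset.sum_subset (Finset.subset_univ ({i, j} : Finset (Fin p)))
        (fun m _ hm => ?_)]
      · rw [Finset.sum_pair hij]
      · simp only [Finset.mem_insert, Finset.mem_singleton, not_or] at hm
        rw [hdoff m hm.1 hm.2, mul_zero]
    have hdi : d i = w i - w j := by
      simp only [hd]
      rw [hs, Equiv.swap_apply_left, abs_of_nonneg hwi, abs_of_nonneg hwj]
    have hdj : d j = w j - w i := by
      simp only [hd]
      rw [hs, Equiv.swap_apply_right, abs_of_nonneg hwi, abs_of_nonneg hwj]
    have hne2 : σ.symm i ≠ σ.symm j := fun h => hij (σ.symm.injective h)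
    have hlamne : lam (σ.symm i) - lam (σ.symm j) ≠ 0 :=
      sub_ne_zero.mpr (fun h => hne2 (hS.injective h))
    have hfinal : S1 - S2 = (lam (σ.symm i) - lam (σ.symm j)) * (w i - w j) := by
      rw [e1, e2, e3, hdi, hdj]; ring
    intro hEq
    have : (lam (σ.symm i) - lam (σ.symm j)) * (w i - w j) = 0 := by
      rw [← hfinal, hEq, sub_self]
    exact (mul_ne_zero hlamne hden) this
  rcases hS12.lt_or_gt with hlt | hlt
  · have : t * S1 + (1 - t) * S2 < S2 := by nlinarith
    rw [hJeq]
    exact this.trans_le hS2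
  · have : t * S1 + (1 - t) * S2 < S1 := by nlinarith
    rw [hJeq]
    exact this.trans_le hS1

lemma jlamD_set_nonempty (lam x : Fin p → ℝ) :
    Set.Nonempty {c | ∃ v : Fin p → ℝ, Jlam lam v ≤ 1 ∧ c = ∑ i, x i * v i} :=
  ⟨0, 0, by rw [jlam_zero]; norm_num, by simp⟩

lemma jlamD_bdd (hp : 0 < p) {lam : Fin p → ℝ} (hA : Antitone lam)
    (hpos : ∀ i, 0 < lam i) (x : Fin p → ℝ) :
    BddAbove {c | ∃ v : Fin p → ℝ, Jlam lam v ≤ 1 ∧ c = ∑ i, x i * v i} := by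
  set l : Fin p := ⟨p - 1, by omega⟩ with hl
  refine ⟨(∑ i, |x i|) * (1 / lam l), ?_⟩
  rintro c ⟨v, hv, rfl⟩
  have hls : ∀ k : Fin p, lam l ≤ lam k := by
    intro k
    refine hA ?_
    rw [Fin.le_def]
    simp only [hl]
    omega
  have hsum_abs : ∑ k, absSorted v k = ∑ i, |v i| := by
    calc ∑ k, absSorted v k = ∑ k, |v (sortPerm v k)| := by
          exact Finset.sum_congr rfl fun k _ => absSorted_apply v k
      _ = ∑ i, |v i| := Equiv.sum_comp (sortPerm v) (fun i => |v i|)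
  have h1 : lam l * ∑ i, |v i| ≤ 1 := by
    have : ∑ k, lam l * absSorted v k ≤ ∑ k, lam k * absSorted v k :=
      Finset.sum_le_sum fun k _ =>
        mul_le_mul_of_nonneg_right (hls k) (abs_nonneg _)
    rw [← Finset.mul_sum, hsum_abs] at this
    exact this.trans hv
  have hvb : ∀ i, |v i| ≤ 1 / lam l := by
    intro i
    have hle : |v i| ≤ ∑ k, |v k| :=
      Finset.single_le_sum (fun k _ => abs_nonneg (v k)) (Finset.mem_univ i)
    have : ∑ k, |v k| ≤ 1 / lam l := by
      rw [le_div_iff₀ (hpos l), mul_comm]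
      exact h1
    exact hle.trans this
  calc ∑ i, x i * v i ≤ ∑ i, |x i| * (1 / lam l) := by
        refine Finset.sum_le_sum fun i _ => ?_
        calc x i * v i ≤ |x i * v i| := le_abs_self _
          _ = |x i| * |v i| := abs_mul _ _
          _ ≤ |x i| * (1 / lam l) :=
            mul_le_mul_of_nonneg_left (hvb i) (abs_nonneg _)
    _ = (∑ i, |x i|) * (1 / lam l) := by rw [Finset.sum_mul]

/-- Monotonicity of the dual norm in the absolute values of the entries. -/
lemma jlamD_mono (hp : 0 < p) {lam : Fin p → ℝ} (hA : Antitone lam)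
    (hpos : ∀ i, 0 < lam i) {x' x : Fin p → ℝ} (h : ∀ i, |x' i| ≤ |x i|) :
    JlamD lam x' ≤ JlamD lam x := by
  simp only [JlamD]
  refine csSup_le (jlamD_set_nonempty lam x') ?_
  rintro c ⟨v, hv, rfl⟩
  set u : Fin p → ℝ := fun i => if 0 ≤ x i then |v i| else -|v i| with hu
  have huv : ∀ i, |u i| = |v i| := by
    intro i
    by_cases hxi : 0 ≤ x i <;> simp [hu, hxi]
  have hJu : Jlam lam u ≤ 1 := by
    rw [jlam_congr_abs huv]; exact hv
  have hle : ∑ i, x i * u i ≤ sSup {c | ∃ v : Fin p → ℝ, Jlam lam v ≤ 1 ∧ c = ∑ i, x i * v i} :=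
    le_csSup (jlamD_bdd hp hA hpos x) ⟨u, hJu, rfl⟩
  refine le_trans ?_ hle
  refine Finset.sum_le_sum fun i _ => ?_
  have hxu : x i * u i = |x i| * |v i| := by
    by_cases hxi : 0 ≤ x i
    · simp only [hu, if_pos hxi]
      rw [abs_of_nonneg hxi]
    · simp only [hu, if_neg hxi]
      rw [abs_of_neg (lt_of_not_ge hxi)]
      ring
  rw [hxu]
  calc x' i * v i ≤ |x' i * v i| := le_abs_self _
    _ = |x' i| * |v i| := abs_mul _ _
    _ ≤ |x i| * |v i| := mul_le_mul_of_nonneg_right (h i) (abs_nonneg _)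

/-- The dual norm does not increase when two coordinates are mixed keeping their sum. -/
lemma jlamD_mix (hp : 0 < p) {lam : Fin p → ℝ} (hA : Antitone lam)
    (hpos : ∀ i, 0 < lam i) {i j : Fin p} (hij : i ≠ j) {x' x : Fin p → ℝ}
    (hoff : ∀ k, k ≠ i → k ≠ j → x' k = x k) (hsum : x' i + x' j = x i + x j)
    (h1 : min (x i) (x j) ≤ x' i) (h2 : x' i ≤ max (x i) (x j)) :
    JlamD lam x' ≤ JlamD lam x := by
  rcases eq_or_ne (x i) (x j) with he | hne
  · have hx'x : x' = x := by
      have hxi : x' i = x i := by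
        refine le_antisymm ?_ ?_
        · rw [← max_eq_left he.ge]; exact h2
        · rw [← min_eq_left he.le]; exact h1
      funext k
      by_cases hki : k = i
      · rw [hki]; exact hxi
      · by_cases hkj : k = j
        · rw [hkj]; linarith
        · exact hoff k hki hkj
    rw [hx'x]
  · have hden : x i - x j ≠ 0 := sub_ne_zero.mpr hne
    set t : ℝ := (x' i - x j) / (x i - x j) with ht
    have h' : t * (x i - x j) = x' i - x j := div_mul_cancel₀ _ hden
    have ht0 : 0 ≤ t := by
      rcases hne.lt_or_gt with hlt | hlt
      · rw [min_eq_left hlt.le] at h1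
        rw [max_eq_right hlt.le] at h2
        nlinarith
      · rw [min_eq_right hlt.le] at h1
        rw [max_eq_left hlt.le] at h2
        nlinarith
    have ht1 : t ≤ 1 := by
      rcases hne.lt_or_gt with hlt | hlt
      · rw [min_eq_left hlt.le] at h1
        rw [max_eq_right hlt.le] at h2
        nlinarith
      · rw [min_eq_right hlt.le] at h1
        rw [max_eq_left hlt.le] at h2
        nlinarith
    have hti : x' i = t * x i + (1 - t) * x j := by
      have : t * x i - t * x j = x' i - x j := by rw [← mul_sub]; exact h'
      linarith
    have htj : x' j = t * x j + (1 - t) * x i := by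
      have hr : t * x j + (1 - t) * x i = x i + x j - (t * x i + (1 - t) * x j) := by ring
      rw [hr, ← hti]
      linarith
    simp only [JlamD]
    refine csSup_le (jlamD_set_nonempty lam x') ?_
    rintro c ⟨v, hv, rfl⟩
    set s := Equiv.swap i j with hs
    have hvJ : Jlam lam (v ∘ s) ≤ 1 := by
      rw [jlam_comp_perm hA v s]; exact hv
    have hAle : ∑ k, x k * v k ≤ JlamD lam x :=
      le_csSup (jlamD_bdd hp hA hpos x) ⟨v, hv, rfl⟩
    have hBle : ∑ k, x k * (v ∘ s) k ≤ JlamD lam x :=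
      le_csSup (jlamD_bdd hp hA hpos x) ⟨v ∘ s, hvJ, rfl⟩
    have hBB : ∑ k, x (s k) * v k = ∑ k, x k * (v ∘ s) k := by
      rw [← Equiv.sum_comp s (fun k => x (s k) * v k)]
      refine Finset.sum_congr rfl fun k _ => ?_
      simp [hs, Equiv.swap_apply_self]
    have key : ∑ k, x' k * v k
        = t * (∑ k, x k * v k) + (1 - t) * (∑ k, x (s k) * v k) := by
      rw [Finset.mul_sum, Finset.mul_sum, ← Finset.sum_add_distrib]
      refine Finset.sum_congr rfl fun k _ => ?_
      by_cases hki : k = i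
      · rw [hki, show s i = j from Equiv.swap_apply_left i j, hti]
        ring
      · by_cases hkj : k = j
        · rw [hkj, show s j = i from Equiv.swap_apply_right i j, htj]
          ring
        · rw [hoff k hki hkj, show s k = k from Equiv.swap_apply_of_ne_of_ne hki hkj]
          ring
    rw [key, hBB]
    show t * (∑ k, x k * v k) + (1 - t) * (∑ k, x k * (v ∘ s) k) ≤ JlamD lam x
    nlinarith [mul_le_mul_of_nonneg_left hAle ht0,
      mul_le_mul_of_nonneg_left hBle (by linarith : (0:ℝ) ≤ 1 - t)]

end ODSAux

open ODSAux in
/-- for strictly decreasing positive `λ` and sorted nonnegative data `y`,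
any ODS solution `w*` and the residual `y − w*` are both nonincreasing and nonnegative. -/
theorem ods_sol_monotone {p : ℕ} (hp : 0 < p) (lam : Fin p → ℝ)
    (hlam : StrictAnti lam) (hpos : ∀ i, 0 < lam i)
    (y : Fin p → ℝ) (hy : Antitone y) (hynn : ∀ i, 0 ≤ y i)
    (wstar : Fin p → ℝ) (hsol : IsODSSol lam y wstar) :
    Antitone wstar ∧ (∀ i, 0 ≤ wstar i) ∧
    Antitone (fun i => y i - wstar i) ∧ (∀ i, 0 ≤ y i - wstar i) := by
  obtain ⟨hfeas, hopt⟩ := hsol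
  have hA : Antitone lam := hlam.antitone
  -- Step 1: nonnegativity of wstar
  have hwnn : ∀ i, 0 ≤ wstar i := by
    intro i
    by_contra hneg
    push_neg at hneg
    set w' := Function.update wstar i 0 with hw'
    have habs : ∀ k, |w' k| ≤ |wstar k| := by
      intro k
      by_cases hk : k = i
      · rw [hk]; simp [hw']
      · simp [hw', Function.update_of_ne hk]
    have hlt : Jlam lam w' < Jlam lam wstar := by
      refine jlam_lt_of_abs_lt hA hpos habs (i0 := i) ?_
      simp only [hw', Function.update_self, abs_zero]
      exact abs_pos.mpr (ne_of_lt hneg)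
    have hres : ∀ k, |(y - w') k| ≤ |(y - wstar) k| := by
      intro k
      by_cases hk : k = i
      · rw [hk]
        simp only [Pi.sub_apply, hw', Function.update_self, sub_zero]
        rw [abs_of_nonneg (hynn i)]
        have : y i ≤ y i - wstar i := by linarith
        exact this.trans (le_abs_self _)
      · simp [Pi.sub_apply, hw', Function.update_of_ne hk]
    have hfeas' : JlamD lam (y - w') ≤ 1 :=
      (jlamD_mono hp hA hpos hres).trans hfeas
    exact absurd (hopt w' hfeas') (not_le.mpr hlt)
  -- Step 2: wstar ≤ y
  have hwle : ∀ i, wstar i ≤ y i := by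
    intro i
    by_contra hgt
    push_neg at hgt
    set w' := Function.update wstar i (y i) with hw'
    have habs : ∀ k, |w' k| ≤ |wstar k| := by
      intro k
      by_cases hk : k = i
      · rw [hk]
        simp only [hw', Function.update_self]
        rw [abs_of_nonneg (hynn i), abs_of_nonneg (hwnn i)]
        exact hgt.le
      · simp [hw', Function.update_of_ne hk]
    have hlt : Jlam lam w' < Jlam lam wstar := by
      refine jlam_lt_of_abs_lt hA hpos habs (i0 := i) ?_
      simp only [hw', Function.update_self]
      rw [abs_of_nonneg (hynn i), abs_of_nonneg (hwnn i)]
      exact hgt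
    have hres : ∀ k, |(y - w') k| ≤ |(y - wstar) k| := by
      intro k
      by_cases hk : k = i
      · rw [hk]
        simp only [Pi.sub_apply, hw', Function.update_self, sub_self, abs_zero]
        exact abs_nonneg _
      · simp [Pi.sub_apply, hw', Function.update_of_ne hk]
    have hfeas' : JlamD lam (y - w') ≤ 1 :=
      (jlamD_mono hp hA hpos hres).trans hfeas
    exact absurd (hopt w' hfeas') (not_le.mpr hlt)
  -- Step 3: wstar antitone
  have hwant : Antitone wstar := by
    intro i j hij'
    rcases eq_or_lt_of_le hij' with rfl | hij2
    · exact le_refl _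
    by_contra hc
    push_neg at hc
    have hijne : i ≠ j := ne_of_lt hij2
    set m : ℝ := (wstar i + wstar j) / 2 with hm
    set w'' := Function.update (Function.update wstar i m) j m with hw''
    have hw''i : w'' i = m := by
      rw [hw'', Function.update_of_ne hijne, Function.update_self]
    have hw''j : w'' j = m := by
      rw [hw'', Function.update_self]
    have hw''off : ∀ k, k ≠ i → k ≠ j → w'' k = wstar k := by
      intro k hki hkj
      rw [hw'', Function.update_of_ne hkj, Function.update_of_ne hki]
    have hm1 : wstar i < m := by rw [hm]; linarith
    have hm2 : m < wstar j := by rw [hm]; linarith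
    have hlt : Jlam lam w'' < Jlam lam wstar := by
      refine jlam_schur hlam hijne hw''off ?_ ?_ ?_ (hwnn i) (hwnn j)
      · rw [hw''i, hw''j, hm]; ring
      · rw [hw''i, min_eq_left hc.le]; exact hm1
      · rw [hw''i, max_eq_right hc.le]; exact hm2
    have hresfeas : JlamD lam (y - w'') ≤ 1 := by
      refine (jlamD_mix hp hA hpos hijne (x' := y - w'') (x := y - wstar)
        ?_ ?_ ?_ ?_).trans hfeas
      · intro k hki hkj
        simp [Pi.sub_apply, hw''off k hki hkj]
      · simp only [Pi.sub_apply, hw''i, hw''j]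
        linarith
      · simp only [Pi.sub_apply, hw''i]
        have hyij : y j ≤ y i := hy hij'
        have : y j - wstar j ≤ y i - m := by linarith
        exact (min_le_right _ _).trans this
      · simp only [Pi.sub_apply, hw''i]
        have : y i - m ≤ y i - wstar i := by linarith
        exact this.trans (le_max_left _ _)
    exact absurd (hopt w'' hresfeas) (not_le.mpr hlt)
  -- Step 4: residual antitone
  have hrant : Antitone (fun i => y i - wstar i) := by
    intro i j hij'
    simp only
    rcases eq_or_lt_of_le hij' with rfl | hij2
    · exact le_refl _
    by_contra hc
    push_neg at hc
    have hijne : i ≠ j := ne_of_lt hij2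
    have hyij : y j ≤ y i := hy hij'
    set ρ : ℝ := ((y i - wstar i) + (y j - wstar j)) / 2 with hρ
    set w'' := Function.update (Function.update wstar i (y i - ρ)) j (y j - ρ) with hw''
    have hw''i : w'' i = y i - ρ := by
      rw [hw'', Function.update_of_ne hijne, Function.update_self]
    have hw''j : w'' j = y j - ρ := by
      rw [hw'', Function.update_self]
    have hw''off : ∀ k, k ≠ i → k ≠ j → w'' k = wstar k := by
      intro k hki hkj
      rw [hw'', Function.update_of_ne hkj, Function.update_of_ne hki]
    have hρ1 : y i - wstar i < ρ := by rw [hρ]; linarith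
    have hρ2 : ρ < y j - wstar j := by rw [hρ]; linarith
    have hwij : wstar j < wstar i := by linarith
    have hlt : Jlam lam w'' < Jlam lam wstar := by
      refine jlam_schur hlam hijne hw''off ?_ ?_ ?_ (hwnn i) (hwnn j)
      · rw [hw''i, hw''j, hρ]; ring
      · rw [hw''i, min_eq_right hwij.le]
        linarith
      · rw [hw''i, max_eq_left hwij.le]
        linarith
    have hresfeas : JlamD lam (y - w'') ≤ 1 := by
      refine (jlamD_mix hp hA hpos hijne (x' := y - w'') (x := y - wstar)
        ?_ ?_ ?_ ?_).trans hfeas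
      · intro k hki hkj
        simp [Pi.sub_apply, hw''off k hki hkj]
      · simp only [Pi.sub_apply, hw''i, hw''j]
        ring
      · simp only [Pi.sub_apply, hw''i]
        have : min (y i - wstar i) (y j - wstar j) = y i - wstar i :=
          min_eq_left hc.le
        rw [this]
        linarith
      · simp only [Pi.sub_apply, hw''i]
        have : max (y i - wstar i) (y j - wstar j) = y j - wstar j :=
          max_eq_right hc.le
        rw [this]
        linarith
    exact absurd (hopt w'' hresfeas) (not_le.mpr hlt)
  exact ⟨hwant, hwnn, hrant, fun i => by linarith [hwle i]⟩
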